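/- Let H be a k-uniform hypergraph on {1,…,n} whose degrees are ordered d_1 ≥ d_2 ≥ … ≥ d_n. For each s with 1 ≤ s ≤ n, set A_1 = C(n−2, k−2)/(k−1), A_2 = ∑_{r=0}^{k−2} ((r+1)/(k−1)) · C(s−1, r+1) · C(n−s, k−r−2), Δ_s = (d_s + s·A_1 − A_2)² + 4·A_1·∑_{t=1}^{s−1} (d_t − d_s), and φ_s = (d_s − A_2 + (s−2)·A_1 + √Δ_s)/2. Then every eigenvalue λ of the adjacency tensor A(H) satisfies |λ| ≤ φ_s for every s with 1 ≤ s ≤ n, and hence |λ| ≤ min_{1 ≤ s ≤ n} φ_s. -/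

import Mathlib

open Finset

/-- A complex number `lam` is an *eigenvalue* of the order-`k`, dimension-`n` tensor `T`
(whose entry `t_{i i₂ … i_k}` is represented as `T i f` with `f = (i₂, …, i_k)`)
if there is a nonzero vector `x : Fin n → ℂ` with
`∑_{i₂,…,i_k} t_{i i₂ … i_k} x_{i₂} ⋯ x_{i_k} = lam · x_i^{k−1}` for every `i`. -/
def IsTensorEigenvalue (n k : ℕ) (T : Fin n → (Fin (k - 1) → Fin n) → ℂ) (lam : ℂ) : Prop :=
  ∃ x : Fin n → ℂ, x ≠ 0 ∧ ∀ i : Fin n,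
    ∑ f : Fin (k - 1) → Fin n, T i f * ∏ j, x (f j) = lam * x i ^ (k - 1)

/-- The degree of vertex `i` in the hypergraph with edge set `E`:
the number of edges containing `i`. -/
def hdegree (n : ℕ) (E : Finset (Finset (Fin n))) (i : Fin n) : ℕ :=
  (E.filter (fun e => i ∈ e)).card

open Classical in
/-- The adjacency tensor of a `k`-uniform hypergraph on `{1,…,n}` with edge set `E`:
the entry `a_{i i₂ … i_k}` equals `1/(k−1)!` if `i, i₂, …, i_k` are distinct and
`{i, i₂, …, i_k} ∈ E`, and `0` otherwise. -/
noncomputable def adjTensor (n k : ℕ) (E : Finset (Finset (Fin n))) :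
    Fin n → (Fin (k - 1) → Fin n) → ℝ := fun i f =>
  if Function.Injective f ∧ i ∉ Finset.image f Finset.univ ∧
      insert i (Finset.image f Finset.univ) ∈ E then
    1 / (Nat.factorial (k - 1) : ℝ)
  else 0

open Classical in
/-- The signless Laplacian tensor `Q(H) = D(H) + A(H)` of a `k`-uniform hypergraph:
`D(H)` is the diagonal tensor whose `(i,…,i)` entry is the degree `d_i`. -/
noncomputable def signlessLapTensor (n k : ℕ) (E : Finset (Finset (Fin n))) :
    Fin n → (Fin (k - 1) → Fin n) → ℝ := fun i f =>
  (if ∀ j, f j = i then (hdegree n E i : ℝ) else 0) + adjTensor n k E i f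



lemma my_amgm {ι : Type*} (m : ℕ) (hm : 1 ≤ m) (A : Finset ι) (hA : A.card = m)
    (y : ι → ℝ) (hy : ∀ u ∈ A, 0 ≤ y u) :
    ∏ u ∈ A, y u ≤ (∑ u ∈ A, y u ^ m) / m := by
  have hm0 : (m : ℝ) ≠ 0 := Nat.cast_ne_zero.mpr (by omega)
  have h := Real.geom_mean_le_arith_mean_weighted A (fun _ => (m : ℝ)⁻¹)
    (fun u => y u ^ m) (fun i _ => by positivity)
    (by rw [sum_const, hA, nsmul_eq_mul]; field_simp)
    (fun i hi => pow_nonneg (hy i hi) m)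
  have heq : ∀ u ∈ A, (y u ^ m : ℝ) ^ ((m : ℝ)⁻¹) = y u := by
    intro u hu
    exact Real.pow_rpow_inv_natCast (hy u hu) (by omega)
  calc ∏ u ∈ A, y u = ∏ u ∈ A, (y u ^ m : ℝ) ^ ((m : ℝ)⁻¹) := (prod_congr rfl heq).symm
    _ ≤ ∑ u ∈ A, (m : ℝ)⁻¹ * y u ^ m := h
    _ = (∑ u ∈ A, y u ^ m) / m := by rw [← mul_sum]; ring


lemma my_card_filter_lt (n m : ℕ) (hmn : m ≤ n) :
    (univ.filter (fun t : Fin n => (t : ℕ) < m)).card = m := by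
  induction m with
  | zero => simp
  | succ m ih =>
    have hm : m < n := by omega
    have : univ.filter (fun t : Fin n => (t : ℕ) < m + 1)
        = insert (⟨m, hm⟩ : Fin n) (univ.filter (fun t : Fin n => (t : ℕ) < m)) := by
      ext t
      simp only [mem_filter, mem_univ, true_and, mem_insert, Fin.ext_iff]
      omega
    rw [this, card_insert_of_notMem (by simp), ih (by omega)]

/-- sum over any m-subset of an antitone function is at most the sum over the first m indices -/
lemma my_top_sum {n : ℕ} (g : Fin n → ℝ) (hg : ∀ i j : Fin n, i ≤ j → g j ≤ g i) :
    ∀ m, m ≤ n → ∀ S : Finset (Fin n), S.card = m →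
      ∑ v ∈ S, g v ≤ ∑ t ∈ univ.filter (fun t : Fin n => (t : ℕ) < m), g t := by
  intro m
  induction m with
  | zero => intro _ S hS; simp [card_eq_zero.mp hS]
  | succ m ih =>
    intro hmn S hS
    have hm : m < n := by omega
    have hne : S.Nonempty := card_pos.mp (by omega)
    set v₀ := S.max' hne with hv₀
    have hv₀S : v₀ ∈ S := S.max'_mem hne
    -- m ≤ v₀
    have hv₀ge : m ≤ (v₀ : ℕ) := by
      by_contra hlt
      push_neg at hlt
      have hsub : S ⊆ univ.filter (fun t : Fin n => (t : ℕ) < m) := by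
        intro u hu
        simp only [mem_filter, mem_univ, true_and]
        have := S.le_max' u hu
        have : (u : ℕ) ≤ (v₀ : ℕ) := this
        omega
      have := card_le_card hsub
      rw [my_card_filter_lt n m (by omega)] at this
      omega
    have hstep : g v₀ ≤ g ⟨m, hm⟩ := hg ⟨m, hm⟩ v₀ (by simpa [Fin.le_def] using hv₀ge)
    have hSe : (S.erase v₀).card = m := by rw [card_erase_of_mem hv₀S, hS]; omega
    have hsplit : univ.filter (fun t : Fin n => (t : ℕ) < m + 1)
        = insert (⟨m, hm⟩ : Fin n) (univ.filter (fun t : Fin n => (t : ℕ) < m)) := by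
      ext t
      simp only [mem_filter, mem_univ, true_and, mem_insert, Fin.ext_iff]
      omega
    have h1 : ∑ v ∈ S, g v = ∑ v ∈ S.erase v₀, g v + g v₀ := by
      rw [sum_erase_add S g hv₀S]
    rw [h1, hsplit, sum_insert (by simp)]
    have := ih (by omega) (S.erase v₀) hSe
    linarith


lemma my_codeg {n k : ℕ} (hk : 2 ≤ k) (E : Finset (Finset (Fin n)))
    (huniform : ∀ e ∈ E, e.card = k) (i u : Fin n) (hiu : u ≠ i) :
    (E.filter (fun e => i ∈ e ∧ u ∈ e)).card ≤ (n - 2).choose (k - 2) := by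
  classical
  have hmap : ∀ e ∈ E.filter (fun e => i ∈ e ∧ u ∈ e),
      (e.erase i).erase u ∈ powersetCard (k - 2) ((univ.erase i).erase u) := by
    intro e he
    rw [mem_filter] at he
    obtain ⟨heE, hie, hue⟩ := he
    rw [mem_powersetCard]
    constructor
    · intro a ha
      simp only [mem_erase] at ha ⊢
      exact ⟨ha.1, ha.2.1, mem_univ a⟩
    · rw [card_erase_of_mem (by simp [mem_erase, hiu, hue]),
        card_erase_of_mem hie, huniform e heE]; omega
  have hinj : ∀ e₁ ∈ E.filter (fun e => i ∈ e ∧ u ∈ e),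
      ∀ e₂ ∈ E.filter (fun e => i ∈ e ∧ u ∈ e),
      (e₁.erase i).erase u = (e₂.erase i).erase u → e₁ = e₂ := by
    intro e₁ h₁ e₂ h₂ h
    rw [mem_filter] at h₁ h₂
    have r : ∀ e : Finset (Fin n), i ∈ e → u ∈ e →
        insert i (insert u ((e.erase i).erase u)) = e := by
      intro e hie hue
      rw [insert_erase (by simp [mem_erase, hiu, hue]), insert_erase hie]
    rw [← r e₁ h₁.2.1 h₁.2.2, ← r e₂ h₂.2.1 h₂.2.2, h]
  calc (E.filter (fun e => i ∈ e ∧ u ∈ e)).card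
      ≤ (powersetCard (k - 2) ((univ.erase i).erase u)).card :=
        card_le_card_of_injOn _ hmap hinj
    _ = ((univ.erase i).erase u).card.choose (k - 2) := card_powersetCard _ _
    _ = (n - 2).choose (k - 2) := by
        rw [card_erase_of_mem (by simp [hiu]), card_erase_of_mem (mem_univ i), card_univ,
          Fintype.card_fin]
        congr 1

lemma my_sumF {n k : ℕ} (hk : 2 ≤ k) (E : Finset (Finset (Fin n)))
    (huniform : ∀ e ∈ E, e.card = k) (i : Fin n) (w : Fin n → ℝ) (hw : ∀ u, 0 ≤ w u) :
    ∑ f : Fin (k-1) → Fin n, adjTensor n k E i f * ∏ j, w (f j)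
      ≤ ∑ e ∈ E.filter (fun e => i ∈ e), ∏ u ∈ e.erase i, w u := by
  classical
  set F : (Fin (k-1) → Fin n) → ℝ := fun f => adjTensor n k E i f * ∏ j, w (f j) with hF
  set G : Finset (Fin n) → ℝ := fun A =>
    if A.card = k - 1 ∧ i ∉ A ∧ insert i A ∈ E then ∏ a ∈ A, w a else 0 with hG
  have hGnn : ∀ A, 0 ≤ G A := by
    intro A; rw [hG]; dsimp only; split
    · exact prod_nonneg (fun a _ => hw a)
    · exact le_refl 0
  have hgrp : ∑ f : Fin (k-1) → Fin n, F f
      = ∑ A : Finset (Fin n),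
          ∑ f ∈ univ.filter (fun f : Fin (k-1) → Fin n => image f univ = A), F f :=
    (Finset.sum_fiberwise univ (fun f => image f univ) F).symm
  -- per-fiber bound
  have hfib : ∀ A : Finset (Fin n),
      (∑ f ∈ univ.filter (fun f : Fin (k-1) → Fin n => image f univ = A), F f) ≤ G A := by
    intro A
    by_cases hc : A.card = k - 1 ∧ i ∉ A ∧ insert i A ∈ E
    · -- true case
      have hAcard : Fintype.card {a // a ∈ A} = k - 1 := by
        rw [Fintype.card_coe, hc.1]
      have hne : Nonempty (Fin (k-1) ≃ {a // a ∈ A}) := by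
        apply Fintype.card_eq.mp
        rw [hAcard, Fintype.card_fin]
      set e₀ := Classical.choice hne with he₀
      set Φ : (Fin (k-1) → Fin n) → (Fin (k-1) ≃ {a // a ∈ A}) := fun f =>
        if h : Function.Injective f ∧ image f univ = A then
          Equiv.ofBijective
            (fun j => (⟨f j, by rw [← h.2]; exact mem_image_of_mem f (mem_univ j)⟩ : {a // a ∈ A}))
            (by
              rw [Fintype.bijective_iff_injective_and_card]
              constructor
              · intro a b hab
                exact h.1 (congrArg Subtype.val hab)
              · rw [hAcard, Fintype.card_fin])
        else e₀ with hΦ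
      have hcount : ((univ.filter (fun f : Fin (k-1) → Fin n => image f univ = A)).filter
          (fun f => Function.Injective f)).card ≤ Nat.factorial (k-1) := by
        have hinjOn : ∀ f₁ ∈ (univ.filter (fun f : Fin (k-1) → Fin n => image f univ = A)).filter
            (fun f => Function.Injective f),
            ∀ f₂ ∈ (univ.filter (fun f : Fin (k-1) → Fin n => image f univ = A)).filter
            (fun f => Function.Injective f), Φ f₁ = Φ f₂ → f₁ = f₂ := by
          intro f₁ h₁ f₂ h₂ heq
          simp only [mem_filter, mem_univ, true_and] at h₁ h₂
          rw [hΦ] at heq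
          simp only at heq
          rw [dif_pos ⟨h₁.2, h₁.1⟩, dif_pos ⟨h₂.2, h₂.1⟩] at heq
          funext j
          have := congrArg (fun e => ((e : Fin (k-1) ≃ {a // a ∈ A}) j : Fin n)) heq
          simpa [Equiv.ofBijective] using this
        calc ((univ.filter (fun f : Fin (k-1) → Fin n => image f univ = A)).filter
            (fun f => Function.Injective f)).card
            ≤ (univ : Finset (Fin (k-1) ≃ {a // a ∈ A})).card :=
              card_le_card_of_injOn Φ (fun f _ => mem_univ _) hinjOn
          _ = Fintype.card (Fin (k-1) ≃ {a // a ∈ A}) := card_univ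
          _ = Nat.factorial (k-1) := by rw [Fintype.card_equiv e₀, Fintype.card_fin]
      -- bound each term
      have hb : ∀ f ∈ univ.filter (fun f : Fin (k-1) → Fin n => image f univ = A),
          F f ≤ (if Function.Injective f then (1/((Nat.factorial (k-1)) : ℝ)) * ∏ a ∈ A, w a else 0) := by
        intro f hf
        rw [mem_filter] at hf
        by_cases hinj : Function.Injective f
        · rw [if_pos hinj]
          have hprod : ∏ j, w (f j) = ∏ a ∈ A, w a := by
            rw [← hf.2, prod_image (fun a _ b _ hab => hinj hab)]
          rw [hF]; dsimp only
          rw [hprod, adjTensor]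
          split
          · exact le_refl _
          · rw [zero_mul]
            exact mul_nonneg (by positivity) (prod_nonneg fun a _ => hw a)
        · rw [if_neg hinj, hF]; dsimp only
          rw [adjTensor, if_neg (by tauto), zero_mul]
      calc ∑ f ∈ univ.filter (fun f : Fin (k-1) → Fin n => image f univ = A), F f
          ≤ ∑ f ∈ univ.filter (fun f : Fin (k-1) → Fin n => image f univ = A),
            (if Function.Injective f then (1/((Nat.factorial (k-1)) : ℝ)) * ∏ a ∈ A, w a else 0) :=
            sum_le_sum hb
        _ = ∑ f ∈ (univ.filter (fun f : Fin (k-1) → Fin n => image f univ = A)).filter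
              (fun f => Function.Injective f), (1/((Nat.factorial (k-1)) : ℝ)) * ∏ a ∈ A, w a :=
            (sum_filter _ _).symm
        _ = (((univ.filter (fun f : Fin (k-1) → Fin n => image f univ = A)).filter
              (fun f => Function.Injective f)).card : ℝ) * ((1/((Nat.factorial (k-1)) : ℝ)) * ∏ a ∈ A, w a) := by
            rw [sum_const, nsmul_eq_mul]
        _ ≤ ((Nat.factorial (k-1)) : ℝ) * ((1/((Nat.factorial (k-1)) : ℝ)) * ∏ a ∈ A, w a) := by
            apply mul_le_mul_of_nonneg_right
            · exact_mod_cast hcount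
            · exact mul_nonneg (by positivity) (prod_nonneg fun a _ => hw a)
        _ = ∏ a ∈ A, w a := by
            have : ((Nat.factorial (k-1)) : ℝ) ≠ 0 := by positivity
            field_simp
        _ = G A := by rw [hG]; dsimp only; rw [if_pos hc]
    · -- false case: every term is zero
      have : ∀ f ∈ univ.filter (fun f : Fin (k-1) → Fin n => image f univ = A), F f = 0 := by
        intro f hf
        rw [mem_filter] at hf
        rw [hF]; dsimp only
        rw [adjTensor]
        rw [if_neg, zero_mul]
        rintro ⟨h1, h2, h3⟩
        apply hc
        refine ⟨?_, by rwa [hf.2] at h2, by rwa [hf.2] at h3⟩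
        rw [← hf.2, card_image_of_injective _ h1, card_univ, Fintype.card_fin]
      rw [sum_eq_zero this]
      exact hGnn A
  -- assemble
  calc ∑ f : Fin (k-1) → Fin n, adjTensor n k E i f * ∏ j, w (f j)
      = ∑ A : Finset (Fin n),
          ∑ f ∈ univ.filter (fun f : Fin (k-1) → Fin n => image f univ = A), F f := hgrp
    _ ≤ ∑ A : Finset (Fin n), G A := sum_le_sum (fun A _ => hfib A)
    _ = ∑ A ∈ (univ : Finset (Finset (Fin n))).filter
          (fun A => A.card = k - 1 ∧ i ∉ A ∧ insert i A ∈ E), ∏ a ∈ A, w a := by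
        rw [sum_filter]
    _ = ∑ e ∈ E.filter (fun e => i ∈ e), ∏ u ∈ e.erase i, w u := by
        apply sum_nbij' (fun A => insert i A) (fun e => e.erase i)
        · intro A hA
          simp only [mem_filter, mem_univ, true_and] at hA
          simp only [mem_filter]
          exact ⟨hA.2.2, mem_insert_self i A⟩
        · intro e he
          simp only [mem_filter] at he
          simp only [mem_filter, mem_univ, true_and]
          refine ⟨?_, notMem_erase i e, by rw [insert_erase he.2]; exact he.1⟩
          rw [card_erase_of_mem he.2, huniform e he.1]
        · intro A hA
          simp only [mem_filter, mem_univ, true_and] at hA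
          exact erase_insert hA.2.1
        · intro e he
          simp only [mem_filter] at he
          exact insert_erase he.2
        · intro A hA
          simp only [mem_filter, mem_univ, true_and] at hA
          rw [erase_insert hA.2.1]


lemma my_A2 {n k s : ℕ} (hk : 2 ≤ k) (hs : 1 ≤ s) (hsn : s ≤ n) :
    ∑ r ∈ Finset.range (k - 1),
        (((r : ℝ) + 1) / ((k : ℝ) - 1)) * ((s - 1).choose (r + 1) : ℝ)
          * ((n - s).choose (k - r - 2) : ℝ)
      = ((s : ℝ) - 1) * (((n - 2).choose (k - 2) : ℝ) / ((k : ℝ) - 1)) := by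
  rcases Nat.eq_or_lt_of_le hs with h1 | h2
  · rw [← h1]
    simp
  · have hs2 : 2 ≤ s := h2
    have hnat : ∀ r : ℕ, (r + 1) * ((s - 1).choose (r + 1)) = (s - 1) * ((s - 2).choose r) := by
      intro r
      have h := Nat.add_one_mul_choose_eq (s - 2) r
      rw [show s - 2 + 1 = s - 1 by omega] at h
      rw [h]
      ring
    have hvan : ∑ r ∈ range (k - 1), (s - 2).choose r * (n - s).choose ((k - 2) - r)
        = (n - 2).choose (k - 2) := by
      have h := Nat.add_choose_eq (s - 2) (n - s) (k - 2)
      rw [Finset.Nat.sum_antidiagonal_eq_sum_range_succ_mk] at h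
      simp only [Nat.succ_eq_add_one] at h
      rw [show s - 2 + (n - s) = n - 2 by omega, show k - 2 + 1 = k - 1 by omega] at h
      exact h.symm
    have hnatsum : ∑ r ∈ range (k - 1), (s - 1) * ((s - 2).choose r) * ((n - s).choose ((k - 2) - r))
        = (s - 1) * (n - 2).choose (k - 2) := by
      rw [← hvan, Finset.mul_sum]
      exact sum_congr rfl (fun r _ => by ring)
    have hterm : ∀ r ∈ range (k - 1),
        (((r : ℝ) + 1) / ((k : ℝ) - 1)) * ((s - 1).choose (r + 1) : ℝ)
          * ((n - s).choose (k - r - 2) : ℝ)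
        = ((((s - 1) * ((s - 2).choose r) * ((n - s).choose ((k - 2) - r)) : ℕ)) : ℝ)
            / ((k : ℝ) - 1) := by
      intro r hr
      have h1 : k - r - 2 = (k - 2) - r := by omega
      rw [h1, ← hnat r]
      push_cast
      ring
    rw [sum_congr rfl hterm, ← sum_div, ← Nat.cast_sum, hnatsum]
    push_cast [Nat.cast_sub hs]
    ring

set_option maxHeartbeats 2000000 in
/-- **Theorem 3.1.**  Let `H` be a `k`-uniform hypergraph on `{1,…,n}` whose degrees are
ordered `d₁ ≥ d₂ ≥ ⋯ ≥ d_n`.  For `1 ≤ s ≤ n` let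
`A₁ = C(n−2,k−2)/(k−1)`, `A₂ = ∑_{r=0}^{k−2} ((r+1)/(k−1))·C(s−1,r+1)·C(n−s,k−r−2)`,
`Δ = (d_s + s·A₁ − A₂)² + 4·A₁·∑_{t=1}^{s−1}(d_t − d_s)`, and
`φ = (d_s − A₂ + (s−2)·A₁ + √Δ)/2`.  Then every eigenvalue `lam` of the adjacency tensor
satisfies `|lam| ≤ φ` (hence `|lam| ≤ min_{1≤s≤n} φ_s`). -/
theorem spectral_radius_le_phi (n k : ℕ) (hk : 2 ≤ k) (hn : k ≤ n)
    (E : Finset (Finset (Fin n))) (huniform : ∀ e ∈ E, e.card = k)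
    (hmono : ∀ i j : Fin n, i ≤ j → hdegree n E j ≤ hdegree n E i)
    (lam : ℂ) (hlam : IsTensorEigenvalue n k (fun i f => ((adjTensor n k E i f : ℝ) : ℂ)) lam)
    (s : ℕ) (hs1 : 1 ≤ s) (hsn : s ≤ n)
    (A₁ A₂ Δ φ : ℝ)
    (hA₁ : A₁ = ((n - 2).choose (k - 2) : ℝ) / ((k : ℝ) - 1))
    (hA₂ : A₂ = ∑ r ∈ Finset.range (k - 1),
        (((r : ℝ) + 1) / ((k : ℝ) - 1)) * ((s - 1).choose (r + 1) : ℝ)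
          * ((n - s).choose (k - r - 2) : ℝ))
    (hΔ : Δ = ((hdegree n E ⟨s - 1, by omega⟩ : ℝ) + (s : ℝ) * A₁ - A₂) ^ 2
        + 4 * A₁ * ∑ t ∈ Finset.univ.filter (fun t : Fin n => (t : ℕ) < s - 1),
            ((hdegree n E t : ℝ) - (hdegree n E ⟨s - 1, by omega⟩ : ℝ)))
    (hφ : φ = ((hdegree n E ⟨s - 1, by omega⟩ : ℝ) - A₂ + ((s : ℝ) - 2) * A₁
        + Real.sqrt Δ) / 2) :
    ‖lam‖ ≤ φ := by
  classical
  obtain ⟨x, hx0, hxe⟩ := hlam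
  set ρ : ℝ := ‖lam‖ with hρdef
  have hρ0 : 0 ≤ ρ := norm_nonneg _
  have hn0 : 0 < n := by omega
  have hkR : (2:ℝ) ≤ (k:ℝ) := by exact_mod_cast hk
  have hk1R : (0:ℝ) < (k:ℝ) - 1 := by linarith
  have hKcast : ((k - 1 : ℕ) : ℝ) = (k:ℝ) - 1 := by
    rw [Nat.cast_sub (by omega)]; simp
  -- maximal coordinate
  have hune : (univ : Finset (Fin n)).Nonempty := ⟨⟨0, hn0⟩, mem_univ _⟩
  obtain ⟨i₀, -, hi₀⟩ := exists_max_image univ (fun i => ‖x i‖) hune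
  set mx : ℝ := ‖x i₀‖ with hmx
  have hmx0 : 0 < mx := by
    obtain ⟨j, hj⟩ := Function.ne_iff.mp hx0
    calc (0:ℝ) < ‖x j‖ := norm_pos_iff.mpr (by simpa using hj)
      _ ≤ mx := hi₀ j (mem_univ j)
  set z : Fin n → ℝ := fun v => (‖x v‖ / mx) ^ (k-1) with hzdef
  have hz0 : ∀ v, 0 ≤ z v := fun v => by rw [hzdef]; positivity
  have hz1 : ∀ v, z v ≤ 1 := fun v => by
    rw [hzdef]
    apply pow_le_one₀ (by positivity)
    rw [div_le_one hmx0]; exact hi₀ v (mem_univ v)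
  have hzi₀ : z i₀ = 1 := by
    rw [hzdef]; simp only [← hmx, div_self hmx0.ne', one_pow]
  have hA1pos : 0 < A₁ := by
    rw [hA₁]
    apply div_pos _ hk1R
    exact_mod_cast Nat.choose_pos (by omega : k - 2 ≤ n - 2)
  set deg : Fin n → ℝ := fun v => (hdegree n E v : ℝ) with hdeg
  have hdegnn : ∀ v, 0 ≤ deg v := fun v => Nat.cast_nonneg _
  have hdegmono : ∀ i j : Fin n, i ≤ j → deg j ≤ deg i := fun i j hij => by
    rw [hdeg]; dsimp only; exact_mod_cast hmono i j hij
  -- KEY inequality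
  have KEY : ∀ i : Fin n, ρ * z i
      ≤ (∑ e ∈ E.filter (fun e => i ∈ e), ∑ u ∈ e.erase i, z u) / ((k:ℝ) - 1) := by
    intro i
    have hadjnn : ∀ f : Fin (k-1) → Fin n, 0 ≤ adjTensor n k E i f := by
      intro f; simp only [adjTensor]; split
      · positivity
      · exact le_refl 0
    have habs : ρ * ‖x i‖ ^ (k-1)
        ≤ ∑ e ∈ E.filter (fun e => i ∈ e), ∏ u ∈ e.erase i, ‖x u‖ := by
      calc ρ * ‖x i‖ ^ (k-1)
          = ‖lam * x i ^ (k-1)‖ := by rw [norm_mul, norm_pow]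
        _ = ‖∑ f : Fin (k-1) → Fin n,
              ((adjTensor n k E i f : ℝ):ℂ) * ∏ j, x (f j)‖ := by rw [hxe i]
        _ ≤ ∑ f : Fin (k-1) → Fin n,
              ‖((adjTensor n k E i f : ℝ):ℂ) * ∏ j, x (f j)‖ :=
            norm_sum_le _ _
        _ = ∑ f : Fin (k-1) → Fin n, adjTensor n k E i f * ∏ j, ‖x (f j)‖ := by
            apply sum_congr rfl; intro f _
            rw [norm_mul, norm_prod, Complex.norm_real, Real.norm_of_nonneg (hadjnn f)]
        _ ≤ ∑ e ∈ E.filter (fun e => i ∈ e), ∏ u ∈ e.erase i, ‖x u‖ :=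
            my_sumF hk E huniform i _ (fun u => norm_nonneg _)
    have hcard_erase : ∀ e ∈ E.filter (fun e => i ∈ e), (e.erase i).card = k - 1 := by
      intro e he
      rw [mem_filter] at he
      rw [card_erase_of_mem he.2, huniform e he.1]
    have hdiv : ρ * z i ≤ ∑ e ∈ E.filter (fun e => i ∈ e),
        ∏ u ∈ e.erase i, (‖x u‖ / mx) := by
      have h1 : ρ * z i = (ρ * ‖x i‖ ^ (k-1)) / mx ^ (k-1) := by
        rw [hzdef]; dsimp only; rw [div_pow]; ring
      have h2 : ∀ e ∈ E.filter (fun e => i ∈ e),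
          ∏ u ∈ e.erase i, (‖x u‖ / mx)
            = (∏ u ∈ e.erase i, ‖x u‖) / mx ^ (k-1) := by
        intro e he
        rw [prod_div_distrib, prod_const, hcard_erase e he]
      rw [h1, sum_congr rfl h2, ← sum_div]
      gcongr
    refine le_trans hdiv ?_
    rw [sum_div]
    apply sum_le_sum
    intro e he
    have := my_amgm (k-1) (by omega) (e.erase i) (hcard_erase e he)
      (fun u => ‖x u‖ / mx) (fun u _ => by positivity)
    rw [hKcast] at this
    refine le_trans this ?_
    apply le_of_eq
    congr 1
  -- coefficient fact : (k-1)*A₁ = choose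
  have hA1k : ((k:ℝ) - 1) * A₁ = ((n - 2).choose (k - 2) : ℝ) := by
    rw [hA₁]; field_simp
  -- dd and Mf
  set dd : ℕ → ℝ := fun j => if h : j < n then deg ⟨j, h⟩ else 0 with hdd
  set Mf : ℕ → ℝ := fun m => ∑ t ∈ univ.filter (fun t : Fin n => (t:ℕ) < m), deg t with hMf
  -- MAIN induction
  have MAIN : ∀ s' : ℕ, 1 ≤ s' → s' ≤ n →
      ρ^2 ≤ (dd (s'-1) - A₁) * ρ + A₁ * (Mf (s'-1) - ((s':ℝ) - 2) * dd (s'-1)) := by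
    intro s'
    induction s' using Nat.strong_induction_on with
    | _ s' IH =>
      intro hs1' hs'n
      have hsn1 : s' - 1 < n := by omega
      have hdds : dd (s'-1) = deg ⟨s'-1, hsn1⟩ := by rw [hdd]; exact dif_pos hsn1
      -- choose p
      have hTne : (univ.filter (fun t : Fin n => s'-1 ≤ (t:ℕ))).Nonempty :=
        ⟨⟨s'-1, hsn1⟩, by simp; omega⟩
      obtain ⟨p, hpmem, hpmax⟩ := exists_max_image _ z hTne
      have hps : s'-1 ≤ (p:ℕ) := by
        simpa using (mem_filter.mp hpmem).2
      have hdp : deg p ≤ dd (s'-1) := by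
        rw [hdds]
        exact hdegmono ⟨s'-1, hsn1⟩ p (by simpa [Fin.le_def] using hps)
      -- choose S
      set Big := univ.filter (fun u : Fin n => z p < z u) with hBig
      have hBigsub : Big ⊆ univ.erase p := by
        intro u hu
        rw [hBig, mem_filter] at hu
        rw [mem_erase]
        refine ⟨?_, mem_univ u⟩
        intro h; rw [h] at hu; exact lt_irrefl _ hu.2
      have hBigcard : Big.card ≤ s' - 1 := by
        have hsub2 : Big ⊆ univ.filter (fun t : Fin n => (t:ℕ) < s'-1) := by
          intro u hu
          rw [hBig, mem_filter] at hu
          rw [mem_filter]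
          refine ⟨mem_univ u, ?_⟩
          by_contra hge
          push_neg at hge
          have := hpmax u (by rw [mem_filter]; exact ⟨mem_univ u, hge⟩)
          linarith [hu.2]
        calc Big.card ≤ _ := card_le_card hsub2
          _ = s' - 1 := my_card_filter_lt n (s'-1) (by omega)
      obtain ⟨S, hBigS, hSsub, hScard⟩ :=
        exists_subsuperset_card_eq hBigsub hBigcard
          (by rw [card_erase_of_mem (mem_univ p), card_univ, Fintype.card_fin]; omega)
      have hpnotS : p ∉ S := fun h => by
        have := hSsub h
        rw [mem_erase] at this
        exact this.1 rfl
      have hout : ∀ u, u ∉ S → z u ≤ z p := by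
        intro u hu
        by_contra hlt
        push_neg at hlt
        exact hu (hBigS (by rw [hBig, mem_filter]; exact ⟨mem_univ u, hlt⟩))
      set w : Fin n → ℝ := fun v => max (z v) (z p) with hw
      set σ : ℝ := ∑ v ∈ S, (w v - z p) with hσ
      have hwnn : ∀ v, 0 ≤ w v - z p := fun v => by
        rw [hw]; simp [le_max_right]
      have hσ0 : 0 ≤ σ := sum_nonneg (fun v _ => hwnn v)
      have hcardS : ((S.card : ℕ) : ℝ) = (s':ℝ) - 1 := by
        rw [hScard, Nat.cast_sub hs1']; simp
      -- CORE inequality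
      have CORE : ∀ i : Fin n, ρ * z i
          ≤ A₁ * (σ - (if i ∈ S then w i - z p else 0)) + deg i * z p := by
        intro i
        have h1 := KEY i
        -- split each inner sum
        have hsplit : ∀ e ∈ E.filter (fun e => i ∈ e),
            ∑ u ∈ e.erase i, z u
              ≤ (∑ u ∈ S, if u ∈ e.erase i then w u - z p else 0) + ((k:ℝ)-1) * z p := by
          intro e he
          have hec : (e.erase i).card = k - 1 := by
            rw [mem_filter] at he
            rw [card_erase_of_mem he.2, huniform e he.1]
          have e1 : ∑ u ∈ e.erase i, z u
              = (∑ u ∈ e.erase i, (z u - z p)) + ((k:ℝ)-1) * z p := by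
            rw [sum_sub_distrib, sum_const, hec, nsmul_eq_mul, hKcast]; ring
          have e2 : ∑ u ∈ e.erase i, (z u - z p)
              ≤ ∑ u ∈ e.erase i, (if u ∈ S then w u - z p else 0) := by
            apply sum_le_sum
            intro u _
            by_cases huS : u ∈ S
            · rw [if_pos huS, hw]
              simp only
              have : z u ≤ max (z u) (z p) := le_max_left _ _
              linarith
            · rw [if_neg huS]
              linarith [hout u huS]
          have e3 : ∑ u ∈ e.erase i, (if u ∈ S then w u - z p else 0)
              = ∑ u ∈ S, (if u ∈ e.erase i then w u - z p else 0) := by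
            rw [sum_ite_mem, sum_ite_mem, inter_comm]
          linarith [e1, e2, e3.symm.le]
        have h2 : (∑ e ∈ E.filter (fun e => i ∈ e), ∑ u ∈ e.erase i, z u)
            ≤ (∑ u ∈ S, ((((E.filter (fun e => i ∈ e)).filter
                (fun e => u ∈ e.erase i)).card : ℝ)) * (w u - z p))
              + deg i * (((k:ℝ)-1) * z p) := by
          calc (∑ e ∈ E.filter (fun e => i ∈ e), ∑ u ∈ e.erase i, z u)
              ≤ ∑ e ∈ E.filter (fun e => i ∈ e),
                 ((∑ u ∈ S, if u ∈ e.erase i then w u - z p else 0) + ((k:ℝ)-1) * z p) :=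
                sum_le_sum hsplit
            _ = (∑ e ∈ E.filter (fun e => i ∈ e),
                 ∑ u ∈ S, if u ∈ e.erase i then w u - z p else 0)
                + deg i * (((k:ℝ)-1) * z p) := by
                rw [sum_add_distrib, sum_const, nsmul_eq_mul]
                simp only [hdeg, hdegree]
            _ = (∑ u ∈ S, ∑ e ∈ E.filter (fun e => i ∈ e),
                 if u ∈ e.erase i then w u - z p else 0)
                + deg i * (((k:ℝ)-1) * z p) := by rw [sum_comm]
            _ = _ := by
                congr 1
                apply sum_congr rfl
                intro u _
                rw [sum_ite, sum_const_zero, add_zero, sum_const, nsmul_eq_mul]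
        have h3 : ∀ u ∈ S, ((((E.filter (fun e => i ∈ e)).filter
              (fun e => u ∈ e.erase i)).card : ℝ)) * (w u - z p)
            ≤ (((k:ℝ)-1) * A₁) * (if u = i then 0 else (w u - z p)) := by
          intro u _
          by_cases hui : u = i
          · rw [if_pos hui, hui]
            have : (E.filter (fun e => i ∈ e)).filter (fun e => i ∈ e.erase i) = ∅ := by
              apply filter_false_of_mem
              intro e _
              simp
            rw [this]
            simp
          · rw [if_neg hui]
            apply mul_le_mul_of_nonneg_right _ (hwnn u)
            rw [filter_filter]
            have hsame : E.filter (fun e => i ∈ e ∧ u ∈ e.erase i)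
                = E.filter (fun e => i ∈ e ∧ u ∈ e) := by
              apply filter_congr
              intro e _
              simp only [mem_erase, hui, true_and, and_congr_right_iff]
              tauto
            rw [hsame, hA1k]
            exact_mod_cast my_codeg hk E huniform i u hui
        have h4 : ∑ u ∈ S, (((k:ℝ)-1) * A₁) * (if u = i then 0 else (w u - z p))
            = (((k:ℝ)-1) * A₁) * (σ - (if i ∈ S then w i - z p else 0)) := by
          rw [← mul_sum]
          congr 1
          by_cases hiS : i ∈ S
          · rw [if_pos hiS]
            have key4 : ∑ u ∈ S, (if u = i then 0 else w u - z p)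
                = ∑ u ∈ S.erase i, (w u - z p) := by
              calc ∑ u ∈ S, (if u = i then 0 else w u - z p)
                  = (∑ u ∈ S.erase i, (if u = i then 0 else w u - z p))
                    + (if i = i then 0 else w i - z p) :=
                      (sum_erase_add S (fun u => if u = i then 0 else w u - z p) hiS).symm
                _ = (∑ u ∈ S.erase i, (w u - z p)) + 0 := by
                    rw [if_pos rfl]
                    congr 1
                    exact sum_congr rfl (fun u hu => if_neg (ne_of_mem_erase hu))
                _ = ∑ u ∈ S.erase i, (w u - z p) := by ring
            have hσS : σ = (∑ u ∈ S.erase i, (w u - z p)) + (w i - z p) := by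
              rw [hσ]
              exact (sum_erase_add S (fun u => w u - z p) hiS).symm
            rw [key4, hσS]
            ring
          · rw [if_neg hiS, hσ, sub_zero]
            apply sum_congr rfl
            intro u hu
            exact if_neg (by rintro rfl; exact hiS hu)
        -- combine
        have h5 : (∑ e ∈ E.filter (fun e => i ∈ e), ∑ u ∈ e.erase i, z u)
            ≤ (((k:ℝ)-1) * A₁) * (σ - (if i ∈ S then w i - z p else 0))
              + deg i * (((k:ℝ)-1) * z p) := by
          calc (∑ e ∈ E.filter (fun e => i ∈ e), ∑ u ∈ e.erase i, z u) ≤ _ := h2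
            _ ≤ _ := by
                apply add_le_add_left
                calc ∑ u ∈ S, ((((E.filter (fun e => i ∈ e)).filter
                      (fun e => u ∈ e.erase i)).card : ℝ)) * (w u - z p)
                    ≤ ∑ u ∈ S, (((k:ℝ)-1) * A₁) * (if u = i then 0 else (w u - z p)) :=
                      sum_le_sum h3
                  _ = _ := h4
        calc ρ * z i ≤ (∑ e ∈ E.filter (fun e => i ∈ e), ∑ u ∈ e.erase i, z u) / ((k:ℝ)-1) :=
              h1
          _ ≤ ((((k:ℝ)-1) * A₁) * (σ - (if i ∈ S then w i - z p else 0))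
              + deg i * (((k:ℝ)-1) * z p)) / ((k:ℝ)-1) := by gcongr
          _ = A₁ * (σ - (if i ∈ S then w i - z p else 0)) + deg i * z p := by
              field_simp
      -- inequality (A')
      have hA' : ρ * z p ≤ A₁ * σ + deg p * z p := by
        have := CORE p
        rw [if_neg hpnotS, sub_zero] at this
        exact this
      -- inequality (B'_v)
      have hB : ∀ v ∈ S, ρ * w v
          ≤ A₁ * (σ - (w v - z p)) + (max (deg v) (dd (s'-1))) * z p := by
        intro v hv
        by_cases hvz : z p ≤ z v
        · have hwv : w v = z v := by rw [hw]; simp [max_eq_left hvz]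
          have hC := CORE v
          rw [if_pos hv] at hC
          rw [hwv] at hC ⊢
          refine le_trans hC ?_
          apply add_le_add_right
          exact mul_le_mul_of_nonneg_right (le_max_left _ _) (hz0 p)
        · push_neg at hvz
          have hwv : w v = z p := by rw [hw]; simp [max_eq_right hvz.le]
          rw [hwv, sub_self, sub_zero]
          calc ρ * z p ≤ A₁ * σ + deg p * z p := hA'
            _ ≤ A₁ * σ + (max (deg v) (dd (s'-1))) * z p := by
                apply add_le_add_right
                apply mul_le_mul_of_nonneg_right _ (hz0 p)
                exact le_trans hdp (le_max_right _ _)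
      -- sum of hB
      have hsummax : ∑ v ∈ S, max (deg v) (dd (s'-1)) ≤ Mf (s'-1) := by
        have hg : ∀ i j : Fin n, i ≤ j →
            max (deg j) (dd (s'-1)) ≤ max (deg i) (dd (s'-1)) :=
          fun i j hij => max_le_max (hdegmono i j hij) (le_refl _)
        have := my_top_sum (fun v => max (deg v) (dd (s'-1))) hg (s'-1) (by omega) S hScard
        refine le_trans this ?_
        rw [hMf]
        apply le_of_eq
        apply sum_congr rfl
        intro t ht
        rw [mem_filter] at ht
        apply max_eq_left
        rw [hdds]
        apply hdegmono
        rw [Fin.le_def]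
        simpa using (le_of_lt ht.2)
      have hB' : ρ * σ + ((s':ℝ) - 1) * (ρ * z p)
          ≤ ((s':ℝ) - 2) * A₁ * σ + Mf (s'-1) * z p := by
        have hsum := sum_le_sum hB
        have lhs_eq : ∑ v ∈ S, ρ * w v = ρ * σ + ((s':ℝ) - 1) * (ρ * z p) := by
          rw [← mul_sum]
          have : ∑ v ∈ S, w v = σ + ((s':ℝ) - 1) * z p := by
            rw [hσ, sum_sub_distrib, sum_const, nsmul_eq_mul, hcardS]
            ring
          rw [this]
          ring
        have rhs_eq : ∑ v ∈ S, (A₁ * (σ - (w v - z p)) + (max (deg v) (dd (s'-1))) * z p)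
            = ((s':ℝ) - 1) * (A₁ * σ) - A₁ * σ
              + (∑ v ∈ S, max (deg v) (dd (s'-1))) * z p := by
          rw [sum_add_distrib, ← sum_mul]
          congr 1
          rw [← mul_sum, sum_sub_distrib, sum_const, nsmul_eq_mul, hcardS, ← hσ]
          ring
        rw [lhs_eq, rhs_eq] at hsum
        have : (∑ v ∈ S, max (deg v) (dd (s'-1))) * z p ≤ Mf (s'-1) * z p :=
          mul_le_mul_of_nonneg_right hsummax (hz0 p)
        nlinarith [this, hsum]
      -- case analysis
      by_cases hcase : ρ ≤ ((s':ℝ) - 2) * A₁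
      · -- use induction hypothesis at s'-1
        have hs2 : 2 ≤ s' := by
          by_contra hlt
          have : s' = 1 := by omega
          rw [this] at hcase
          norm_num at hcase
          linarith
        have IH' := IH (s'-1) (by omega) (by omega) (by omega)
        have hdd2 : dd (s'-1-1) = deg ⟨s'-2, by omega⟩ := by
          rw [hdd]
          have : s'-1-1 = s'-2 := by omega
          rw [this]
          exact dif_pos (by omega)
        have hdds' : dd (s'-1) = deg ⟨s'-1, hsn1⟩ := hdds
        have hMstep : Mf (s'-1) = Mf (s'-1-1) + deg ⟨s'-2, by omega⟩ := by
          simp only [hMf]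
          have hins : univ.filter (fun t : Fin n => (t:ℕ) < s'-1)
              = insert (⟨s'-2, by omega⟩ : Fin n)
                  (univ.filter (fun t : Fin n => (t:ℕ) < s'-1-1)) := by
            ext t
            simp only [mem_filter, mem_univ, true_and, mem_insert, Fin.ext_iff]
            omega
          rw [hins, sum_insert (by simp only [mem_filter, mem_univ, true_and]; omega)]
          ring
        have hmono2 : deg ⟨s'-1, hsn1⟩ ≤ deg ⟨s'-2, by omega⟩ := by
          apply hdegmono
          rw [Fin.le_def]
          simp
          omega
        have hcast2 : ((s'-1 : ℕ) : ℝ) = (s':ℝ) - 1 := by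
          rw [Nat.cast_sub hs1']; simp
        rw [hcast2] at IH'
        rw [hdd2] at IH'
        rw [hdds', hMstep]
        have expand : (deg ⟨s'-1, hsn1⟩ - A₁) * ρ
              + A₁ * (Mf (s'-1-1) + deg ⟨s'-2, by omega⟩
                - ((s':ℝ) - 2) * deg ⟨s'-1, hsn1⟩)
            = ((deg ⟨s'-2, by omega⟩ - A₁) * ρ
              + A₁ * (Mf (s'-1-1) - ((s':ℝ) - 1 - 2) * deg ⟨s'-2, by omega⟩))
              + (deg ⟨s'-2, by omega⟩ - deg ⟨s'-1, hsn1⟩) * (((s':ℝ) - 2) * A₁ - ρ) := by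
          ring
        rw [expand]
        nlinarith [IH', hmono2, hcase]
      · push_neg at hcase
        by_cases hzp : z p = 0
        · exfalso
          have hi₀S : i₀ ∈ S := by
            apply hBigS
            rw [hBig, mem_filter]
            refine ⟨mem_univ i₀, ?_⟩
            rw [hzp, hzi₀]; norm_num
          have hσ1 : 1 ≤ σ := by
            rw [hσ]
            calc (1:ℝ) = w i₀ - z p := by
                  simp only [hw, hzp, hzi₀]; norm_num
              _ ≤ ∑ v ∈ S, (w v - z p) :=
                  single_le_sum (fun v _ => hwnn v) hi₀S
          rw [hzp] at hB'
          simp only [mul_zero, add_zero] at hB'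
          nlinarith [hB', hσ1, hcase]
        · have hzp' : 0 < z p := lt_of_le_of_ne (hz0 p) (Ne.symm hzp)
          have h1 : (ρ - dd (s'-1)) * z p ≤ A₁ * σ := by
            have : deg p * z p ≤ dd (s'-1) * z p :=
              mul_le_mul_of_nonneg_right hdp (hz0 p)
            nlinarith [hA', this]
          have h2 : (ρ - ((s':ℝ) - 2) * A₁) * σ ≤ (Mf (s'-1) - ((s':ℝ) - 1) * ρ) * z p := by
            nlinarith [hB']
          have h3 : (ρ - dd (s'-1)) * (ρ - ((s':ℝ) - 2) * A₁) * z p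
              ≤ A₁ * (Mf (s'-1) - ((s':ℝ) - 1) * ρ) * z p := by
            calc (ρ - dd (s'-1)) * (ρ - ((s':ℝ) - 2) * A₁) * z p
                = ((ρ - dd (s'-1)) * z p) * (ρ - ((s':ℝ) - 2) * A₁) := by ring
              _ ≤ (A₁ * σ) * (ρ - ((s':ℝ) - 2) * A₁) := by
                  apply mul_le_mul_of_nonneg_right h1
                  linarith
              _ = A₁ * ((ρ - ((s':ℝ) - 2) * A₁) * σ) := by ring
              _ ≤ A₁ * ((Mf (s'-1) - ((s':ℝ) - 1) * ρ) * z p) :=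
                  mul_le_mul_of_nonneg_left h2 hA1pos.le
              _ = A₁ * (Mf (s'-1) - ((s':ℝ) - 1) * ρ) * z p := by ring
          have h4 : (ρ - dd (s'-1)) * (ρ - ((s':ℝ) - 2) * A₁)
              ≤ A₁ * (Mf (s'-1) - ((s':ℝ) - 1) * ρ) :=
            le_of_mul_le_mul_right (by linarith [h3]) hzp'
          nlinarith [h4]
  -- conclude
  have hQ := MAIN s hs1 hsn
  have hsn1 : s - 1 < n := by omega
  have hdds : dd (s-1) = deg ⟨s-1, hsn1⟩ := by rw [hdd]; exact dif_pos hsn1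
  rw [hdds] at hQ
  -- A₂ identity
  have hA2eq : A₂ = ((s:ℝ) - 1) * A₁ := by
    rw [hA₂, hA₁]
    exact my_A2 hk hs1 hsn
  -- rewrite Δ
  have hcardf : ((univ.filter (fun t : Fin n => (t:ℕ) < s - 1)).card : ℝ) = (s:ℝ) - 1 := by
    rw [my_card_filter_lt n (s-1) (by omega), Nat.cast_sub hs1]; simp
  have hsumdiff : ∑ t ∈ univ.filter (fun t : Fin n => (t:ℕ) < s - 1),
      ((hdegree n E t : ℝ) - (hdegree n E ⟨s - 1, by omega⟩ : ℝ))
      = Mf (s-1) - ((s:ℝ) - 1) * deg ⟨s-1, hsn1⟩ := by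
    rw [sum_sub_distrib, sum_const, nsmul_eq_mul, hcardf, hMf]
  have hS₀ : 0 ≤ Mf (s-1) - ((s:ℝ) - 1) * deg ⟨s-1, hsn1⟩ := by
    have : ∑ t ∈ univ.filter (fun t : Fin n => (t:ℕ) < s - 1), deg ⟨s-1, hsn1⟩
        ≤ ∑ t ∈ univ.filter (fun t : Fin n => (t:ℕ) < s - 1), deg t := by
      apply sum_le_sum
      intro t ht
      rw [mem_filter] at ht
      apply hdegmono
      rw [Fin.le_def]
      simpa using le_of_lt ht.2
    rw [sum_const, nsmul_eq_mul, hcardf] at this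
    rw [hMf]
    linarith [this]
  have hΔ' : Δ = (deg ⟨s-1, hsn1⟩ + A₁)^2
      + 4 * A₁ * (Mf (s-1) - ((s:ℝ) - 1) * deg ⟨s-1, hsn1⟩) := by
    rw [hΔ, hsumdiff, hA2eq]
    have : (hdegree n E ⟨s - 1, by omega⟩ : ℝ) = deg ⟨s-1, hsn1⟩ := rfl
    rw [this]
    ring
  have hΔnn : 0 ≤ Δ := by
    rw [hΔ']
    have := sq_nonneg (deg ⟨s-1, hsn1⟩ + A₁)
    nlinarith [hS₀, hA1pos]
  have hsq : (2*ρ - (deg ⟨s-1, hsn1⟩ - A₁))^2 ≤ Δ := by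
    rw [hΔ']
    nlinarith [hQ]
  have hle : 2*ρ - (deg ⟨s-1, hsn1⟩ - A₁) ≤ Real.sqrt Δ :=
    le_trans (le_abs_self _) (Real.abs_le_sqrt hsq)
  rw [hφ, hA2eq]
  have : (hdegree n E ⟨s - 1, by omega⟩ : ℝ) = deg ⟨s-1, hsn1⟩ := rfl
  rw [this]
  rw [hρdef] at hle
  linarith [hle]
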